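/- There exists a constant C > 0 such that for every continuous 2π-periodic function f : ℝ → ℂ with mean zero (i.e., f̂(0) = 0, where û(k) = (1/2π)∫₀^{2π} u(x) e^{−ikx} dx) and with ∑_{k∈ℤ} |k| |f̂(k)|² < ∞, one has ∫₀^{2π} |f(x)|² dx ≤ C · ( ∫₀^{2π} |f(x)| dx ) · ( ∑_{k∈ℤ} |k| |f̂(k)|² )^{1/2}. -/

import Mathlib

open MeasureTheory

/-- The `k`-th Fourier coefficient of a `2π`-periodic function `u : ℝ → ℂ`:
`û(k) = (1/2π) ∫₀^{2π} u(x) e^{−ikx} dx`. -/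
noncomputable def fourierCoefC (u : ℝ → ℂ) (k : ℤ) : ℂ :=
  (1 / (2 * Real.pi) : ℝ) *
    ∫ x in (0:ℝ)..(2 * Real.pi), u x * Complex.exp (-Complex.I * k * x)

/-- Auxiliary optimization lemma: if `S ≤ (2N+1)M² + H/N` for all `N ≥ 1`, with the
stated positivity/degeneracy side conditions, then `S ≤ 6 M √H`. -/
lemma auxOptBound (M S H : ℝ) (hMnon : 0 ≤ M) (hSnon : 0 ≤ S) (hSH : S ≤ H)
    (hMzero : M = 0 → S = 0)
    (hmain : ∀ N : ℕ, 1 ≤ N → S ≤ (2 * N + 1) * M ^ 2 + H / N) :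
    S ≤ 6 * M * Real.sqrt H := by
  have hHnon : 0 ≤ H := le_trans hSnon hSH
  have hs2 : Real.sqrt H * Real.sqrt H = H := Real.mul_self_sqrt hHnon
  have hsqnon : 0 ≤ Real.sqrt H := Real.sqrt_nonneg H
  rcases eq_or_lt_of_le hSnon with hS0 | hSpos
  · rw [← hS0]; positivity
  rcases eq_or_lt_of_le hMnon with hM0 | hMpos
  · exact absurd hSpos (by rw [hMzero hM0.symm]; exact lt_irrefl 0)
  have hHpos : 0 < H := lt_of_lt_of_le hSpos hSH
  have hsqrtH : 0 < Real.sqrt H := Real.sqrt_pos.mpr hHpos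
  rcases le_or_gt (Real.sqrt H) M with hc | hc
  · -- `H ≤ M²`: then `S ≤ H = √H·√H ≤ M·√H ≤ 6M√H`
    have h1 : Real.sqrt H * Real.sqrt H ≤ Real.sqrt H * M :=
      mul_le_mul_of_nonneg_left hc hsqnon
    have h2 : (0:ℝ) ≤ M * Real.sqrt H := by positivity
    linarith
  · -- `M < √H`: optimize with `N = ⌈√H/M⌉`
    set N : ℕ := ⌈Real.sqrt H / M⌉₊ with hN
    have hq : (1:ℝ) ≤ Real.sqrt H / M := by
      rw [le_div_iff₀ hMpos]; linarith
    have hN1 : 1 ≤ N := by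
      rw [hN]
      refine Nat.one_le_iff_ne_zero.mpr fun h => ?_
      rw [Nat.ceil_eq_zero] at h
      linarith
    have hNge : Real.sqrt H / M ≤ (N : ℝ) := Nat.le_ceil _
    have hNle : (N : ℝ) ≤ Real.sqrt H / M + 1 := (Nat.ceil_lt_add_one (by linarith)).le
    have hNpos : (0:ℝ) < N := by exact_mod_cast hN1
    have h12 := hmain N hN1
    have e1 : Real.sqrt H / M * (M * Real.sqrt H) = Real.sqrt H * Real.sqrt H := by
      rw [div_mul_eq_mul_div, mul_comm M (Real.sqrt H), ← mul_assoc,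
        mul_div_cancel_right₀ _ (ne_of_gt hMpos)]
    have ht1 : H / N ≤ M * Real.sqrt H := by
      rw [div_le_iff₀ hNpos]
      have h3 := mul_le_mul_of_nonneg_right hNge
        (le_of_lt (by positivity : (0:ℝ) < M * Real.sqrt H))
      rw [e1, hs2] at h3
      linarith
    have e2 : Real.sqrt H / M * M ^ 2 = Real.sqrt H * M := by
      rw [pow_two, div_mul_eq_mul_div, ← mul_assoc,
        mul_div_assoc, div_self (ne_of_gt hMpos), mul_one]
    have hMH : M ^ 2 ≤ M * Real.sqrt H := by
      rw [pow_two]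
      exact mul_le_mul_of_nonneg_left hc.le hMnon
    have ht2 : (2 * (N:ℝ) + 1) * M ^ 2 ≤ 5 * (M * Real.sqrt H) := by
      have h4 : (2 * (N:ℝ) + 1) * M ^ 2 ≤ (2 * (Real.sqrt H / M + 1) + 1) * M ^ 2 := by
        have := sq_nonneg M
        nlinarith
      have h5 : (2 * (Real.sqrt H / M + 1) + 1) * M ^ 2
          = 2 * (Real.sqrt H / M * M ^ 2) + 3 * M ^ 2 := by ring
      rw [h5, e2] at h4
      nlinarith
    calc S ≤ (2 * N + 1) * M ^ 2 + H / N := h12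
      _ ≤ 5 * (M * Real.sqrt H) + M * Real.sqrt H := add_le_add ht2 ht1
      _ = 6 * M * Real.sqrt H := by ring

/-- Interpolation inequality `‖f‖²_{L²(𝕋)} ≲ ‖f‖_{L¹(𝕋)} ‖f‖_{Ḣ^{1/2}(𝕋)}` for
continuous mean-zero `2π`-periodic functions, where
`‖f‖²_{Ḣ^{1/2}} = ∑_{k∈ℤ} |k||f̂(k)|²`. -/
theorem L2_L1_Hhalf_interpolation :
    ∃ C : ℝ, 0 < C ∧
      ∀ f : ℝ → ℂ, Continuous f → Function.Periodic f (2 * Real.pi) →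
        fourierCoefC f 0 = 0 →
        Summable (fun k : ℤ => (|k| : ℝ) * ‖fourierCoefC f k‖ ^ 2) →
        ∫ x in (0:ℝ)..(2 * Real.pi), ‖f x‖ ^ 2 ≤
          C * (∫ x in (0:ℝ)..(2 * Real.pi), ‖f x‖) *
            Real.sqrt (∑' k : ℤ, (|k| : ℝ) * ‖fourierCoefC f k‖ ^ 2) := by
  have hπ : (0:ℝ) < 2 * Real.pi := by positivity
  haveI : Fact ((0:ℝ) < 2 * Real.pi) := ⟨hπ⟩
  refine ⟨6, by norm_num, ?_⟩
  intro f hf hp h0 hH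
  -- lift to the circle
  let g : AddCircle (2 * Real.pi) → ℂ := hp.lift
  have hgc : ∀ x : ℝ, g (x : AddCircle (2 * Real.pi)) = f x := fun x => hp.lift_coe x
  have hgcont : Continuous g := by
    exact hf.quotient_liftOn' (fun a b h' => by
      rw [QuotientAddGroup.leftRel_apply] at h'
      obtain ⟨k, hk⟩ := h'
      exact ((hp.zsmul k _).symm.trans (congr_arg f (add_eq_of_eq_neg_add hk))))
  -- identify Fourier coefficients
  have hcoef : ∀ n : ℤ, fourierCoeff g n = fourierCoefC f n := by
    intro n
    rw [fourierCoeff_eq_intervalIntegral g n 0, zero_add, fourierCoefC, Complex.real_smul]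
    congr 1
    apply intervalIntegral.integral_congr
    intro x hx
    simp only [smul_eq_mul, hgc x, fourier_coe_apply]
    rw [mul_comm]
    congr 2
    have hπ' : (Real.pi : ℂ) ≠ 0 := by exact_mod_cast Real.pi_ne_zero
    push_cast
    field_simp
  -- Parseval
  set gC : C(AddCircle (2 * Real.pi), ℂ) := ⟨g, hgcont⟩ with hgC
  have hpars : ∑' n : ℤ, ‖fourierCoefC f n‖ ^ 2
      = (1 / (2 * Real.pi)) * ∫ x in (0:ℝ)..(2 * Real.pi), ‖f x‖ ^ 2 := by
    have h1 := tsum_sq_fourierCoeff (ContinuousMap.toLp (E := ℂ) 2 AddCircle.haarAddCircle ℂ gC)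
    simp_rw [fourierCoeff_toLp] at h1
    have h2 : ∫ t : AddCircle (2 * Real.pi),
          ‖(ContinuousMap.toLp (E := ℂ) 2 AddCircle.haarAddCircle ℂ gC :
              Lp ℂ 2 (AddCircle.haarAddCircle)) t‖ ^ 2 ∂AddCircle.haarAddCircle
        = ∫ t : AddCircle (2 * Real.pi), ‖g t‖ ^ 2 ∂AddCircle.haarAddCircle := by
      refine integral_congr_ae ?_
      filter_upwards [ContinuousMap.coeFn_toLp (p := 2) AddCircle.haarAddCircle (𝕜 := ℂ) gC] with t ht
      rw [ht]; rfl
    have h4 := AddCircle.intervalIntegral_preimage (2 * Real.pi) 0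
        (fun z : AddCircle (2 * Real.pi) => ‖g z‖ ^ 2)
    rw [AddCircle.volume_eq_smul_haarAddCircle, integral_smul_measure,
      ENNReal.toReal_ofReal hπ.le] at h4
    simp only [zero_add, smul_eq_mul] at h4
    have h5 : (∫ x in (0:ℝ)..(2 * Real.pi), ‖g (x : AddCircle (2 * Real.pi))‖ ^ 2)
        = ∫ x in (0:ℝ)..(2 * Real.pi), ‖f x‖ ^ 2 := by
      apply intervalIntegral.integral_congr
      intro x _
      simp only [hgc x]
    have h6 : ∑' n : ℤ, ‖fourierCoefC f n‖ ^ 2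
        = ∫ t : AddCircle (2 * Real.pi), ‖g t‖ ^ 2 ∂AddCircle.haarAddCircle := by
      rw [← h2, ← h1]
      refine tsum_congr fun n => ?_
      rw [show fourierCoeff (⇑gC) n = fourierCoeff g n from rfl, hcoef n]
    rw [h6, ← h5, h4]
    field_simp
  -- abbreviations
  set a : ℤ → ℝ := fun k => ‖fourierCoefC f k‖ with ha
  have ha0 : a 0 = 0 := by simp [ha, h0]
  have hanon : ∀ k, 0 ≤ a k := fun k => norm_nonneg _
  set M : ℝ := (1 / (2 * Real.pi)) * ∫ x in (0:ℝ)..(2 * Real.pi), ‖f x‖ with hM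
  -- coefficient bound
  have hint : IntervalIntegrable (fun x => ‖f x‖) volume 0 (2 * Real.pi) :=
    (hf.norm).intervalIntegrable _ _
  have hMnon : 0 ≤ M := by
    rw [hM]
    have : 0 ≤ ∫ x in (0:ℝ)..(2 * Real.pi), ‖f x‖ :=
      intervalIntegral.integral_nonneg hπ.le (fun x _ => norm_nonneg _)
    positivity
  have hMb : ∀ k, a k ≤ M := by
    intro k
    show ‖fourierCoefC f k‖ ≤ M
    rw [fourierCoefC, hM]
    rw [norm_mul]
    have h7 : ‖((1 / (2 * Real.pi) : ℝ) : ℂ)‖ = 1 / (2 * Real.pi) := by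
      rw [Complex.norm_real, Real.norm_eq_abs, abs_of_pos (by positivity)]
    rw [h7]
    have h8 : ‖∫ x in (0:ℝ)..(2 * Real.pi), f x * Complex.exp (-Complex.I * k * x)‖
        ≤ ∫ x in (0:ℝ)..(2 * Real.pi), ‖f x‖ := by
      refine le_trans (intervalIntegral.norm_integral_le_integral_norm hπ.le) ?_
      refine le_of_eq (intervalIntegral.integral_congr fun x _ => ?_)
      simp only [norm_mul]
      have : ‖Complex.exp (-Complex.I * k * x)‖ = 1 := by
        rw [Complex.norm_exp]
        have : (-Complex.I * k * x).re = 0 := by simp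
        rw [this, Real.exp_zero]
      rw [this, mul_one]
    have h9 : (0:ℝ) ≤ 1 / (2 * Real.pi) := by positivity
    exact mul_le_mul_of_nonneg_left h8 h9
  -- summability of squares and comparison with H
  have hcmp : ∀ k : ℤ, a k ^ 2 ≤ (|k| : ℝ) * a k ^ 2 := by
    intro k
    rcases eq_or_ne k 0 with rfl | hk
    · simp [ha0]
    · have h1k : (1:ℝ) ≤ |(k:ℝ)| := by exact_mod_cast Int.one_le_abs hk
      have := mul_le_mul_of_nonneg_right h1k (sq_nonneg (a k))
      linarith
  have hSsum : Summable (fun k : ℤ => a k ^ 2) :=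
    Summable.of_nonneg_of_le (fun k => sq_nonneg _) hcmp hH
  set S : ℝ := ∑' k : ℤ, a k ^ 2 with hS
  set H : ℝ := ∑' k : ℤ, (|k| : ℝ) * a k ^ 2 with hHdef
  have hSH : S ≤ H := Summable.tsum_le_tsum hcmp hSsum hH
  have hSnon : 0 ≤ S := tsum_nonneg fun k => sq_nonneg _
  have hHnon : 0 ≤ H := hSnon.trans hSH
  -- main splitting estimate
  have hmain : ∀ N : ℕ, 1 ≤ N → S ≤ (2 * N + 1) * M ^ 2 + H / N := by
    intro N hN
    have hNpos : (0:ℝ) < N := by exact_mod_cast hN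
    set s : Finset ℤ := Finset.Icc (-(N:ℤ)) N with hs
    have hsplit : (∑ k ∈ s, a k ^ 2) + ∑' k : ↑((s : Set ℤ))ᶜ, a k ^ 2 = S :=
      Summable.sum_add_tsum_compl hSsum
    have hfin : (∑ k ∈ s, a k ^ 2) ≤ (2 * N + 1) * M ^ 2 := by
      have hcard : (s.card : ℝ) = 2 * N + 1 := by
        have h : s.card = 2 * N + 1 := by
          rw [hs, Int.card_Icc]
          omega
        rw [h]; push_cast; ring
      calc (∑ k ∈ s, a k ^ 2) ≤ ∑ _k ∈ s, M ^ 2 := by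
            refine Finset.sum_le_sum fun k _ => ?_
            exact pow_le_pow_left₀ (hanon k) (hMb k) 2
        _ = s.card * M ^ 2 := by rw [Finset.sum_const, nsmul_eq_mul]
        _ = (2 * N + 1) * M ^ 2 := by rw [hcard]
    have htail : (∑' k : ↑((s : Set ℤ))ᶜ, a k ^ 2) ≤ H / N := by
      have hsub : ∀ k : ↑((s : Set ℤ))ᶜ, a (k : ℤ) ^ 2
          ≤ (1 / N) * (|((k : ℤ) : ℝ)| * a (k : ℤ) ^ 2) := by
        rintro ⟨k, hk⟩
        have hk' : ¬(-(N:ℤ) ≤ k ∧ k ≤ N) := by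
          simpa [hs, Finset.mem_Icc] using hk
        have hkN : (N : ℝ) ≤ |(k : ℝ)| := by
          have h : (N : ℤ) ≤ |k| := by
            rcases le_or_gt 0 k with h | h
            · rw [abs_of_nonneg h]; omega
            · rw [abs_of_neg h]; omega
          exact_mod_cast h
        have h10 : a k ^ 2 * (N : ℝ) ≤ |(k : ℝ)| * a k ^ 2 := by
          nlinarith [sq_nonneg (a k)]
        rw [div_mul_eq_mul_div, one_mul, le_div_iff₀ hNpos]
        linarith
      have hsum1 : Summable (fun k : ↑((s : Set ℤ))ᶜ => a (k : ℤ) ^ 2) := hSsum.subtype _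
      have hsum2 : Summable (fun k : ↑((s : Set ℤ))ᶜ =>
          (1 / (N:ℝ)) * (|((k : ℤ) : ℝ)| * a (k : ℤ) ^ 2)) :=
        (hH.subtype _).mul_left _
      calc (∑' k : ↑((s : Set ℤ))ᶜ, a (k : ℤ) ^ 2)
          ≤ ∑' k : ↑((s : Set ℤ))ᶜ, (1 / (N:ℝ)) * (|((k : ℤ) : ℝ)| * a (k : ℤ) ^ 2) :=
            Summable.tsum_le_tsum hsub hsum1 hsum2
        _ = (1 / (N:ℝ)) * ∑' k : ↑((s : Set ℤ))ᶜ, (|((k : ℤ) : ℝ)| * a (k : ℤ) ^ 2) :=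
            tsum_mul_left
        _ ≤ (1 / (N:ℝ)) * H := by
            refine mul_le_mul_of_nonneg_left ?_ (by positivity)
            exact Summable.tsum_subtype_le (fun k : ℤ => (|k| : ℝ) * a k ^ 2) _
              (fun k => mul_nonneg (by positivity) (sq_nonneg _)) hH
        _ = H / N := by ring
    linarith
  -- conclude
  have hLHS : (∫ x in (0:ℝ)..(2 * Real.pi), ‖f x‖ ^ 2) = (2 * Real.pi) * S := by
    rw [hpars]
    field_simp
  have hRHS : (6:ℝ) * (∫ x in (0:ℝ)..(2 * Real.pi), ‖f x‖) * Real.sqrt H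
      = (2 * Real.pi) * (6 * M * Real.sqrt H) := by
    rw [hM]; field_simp
  have hHeq : Real.sqrt (∑' k : ℤ, (|k| : ℝ) * ‖fourierCoefC f k‖ ^ 2) = Real.sqrt H := rfl
  rw [hLHS, hHeq, hRHS]
  have hMzero : M = 0 → S = 0 := by
    intro hM0
    have hz : ∀ k, a k ^ 2 = 0 := by
      intro k
      have h11 := (hMb k).trans hM0.le
      have h12 := le_antisymm h11 (hanon k)
      rw [h12]; ring
    rw [hS]
    simp only [hz]
    exact tsum_zero
  have hgoal : S ≤ 6 * M * Real.sqrt H :=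
    auxOptBound M S H hMnon hSnon hSH hMzero hmain
  have h2π : (0:ℝ) < 2 * Real.pi := hπ
  nlinarith [hgoal]
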